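/- Let n ≥ 2 and let w_0, ..., w_{n-1} be real arc weights on the directed cycle on n vertices with total weight w = Σ_i w_i nonzero. Let W be the weighted distance matrix. Then det(W) = (-1)^{n-1} w^{n-2} w^{(2)}, where w^{(2)} = Σ_{0 ≤ i < j ≤ n-1} w_i w_j. -/

import Mathlib

open Matrix
open Finset

lemma det_updateRow_add_sum_smul {R : Type*} [CommRing R] {ι : Type*} [DecidableEq ι] [Fintype ι]
    (M : Matrix ι ι R) (i : ι) (s : Finset ℕ) (g : ℕ → ι) (c : ℕ → R)
    (h : ∀ t ∈ s, g t ≠ i) :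
    (M.updateRow i (M i + ∑ t ∈ s, c t • M (g t))).det = M.det := by
  induction s using Finset.induction with
  | empty => simp
  | @insert a s' ha ih =>
    rw [Finset.sum_insert ha]
    have hga : g a ≠ i := h a (Finset.mem_insert_self a s')
    set v := M i + ∑ t ∈ s', c t • M (g t) with hv
    have h1 : M i + (c a • M (g a) + ∑ t ∈ s', c t • M (g t))
        = (M.updateRow i v) i + c a • (M.updateRow i v) (g a) := by
      rw [Matrix.updateRow_ne hga, Matrix.updateRow_self, hv]; abel
    have h3 : ∀ u, M.updateRow i u = (M.updateRow i v).updateRow i u := by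
      intro u; ext r j
      by_cases hr : r = i
      · subst hr; rw [Matrix.updateRow_self, Matrix.updateRow_self]
      · rw [Matrix.updateRow_ne hr, Matrix.updateRow_ne hr, Matrix.updateRow_ne hr]
    rw [h1, h3,
      Matrix.det_updateRow_add_smul_self _ (Ne.symm hga),
      ih (fun t ht => h t (Finset.mem_insert_of_mem ht))]

lemma det_updateCol_add_sum_smul {R : Type*} [CommRing R] {ι : Type*} [DecidableEq ι] [Fintype ι]
    (M : Matrix ι ι R) (i : ι) (s : Finset ℕ) (g : ℕ → ι) (c : ℕ → R)
    (h : ∀ t ∈ s, g t ≠ i) :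
    (M.updateCol i (fun k => M k i + ∑ t ∈ s, c t • M k (g t))).det = M.det := by
  rw [← Matrix.det_transpose, ← Matrix.updateRow_transpose, ← Matrix.det_transpose M]
  rw [show (fun k => M k i + ∑ t ∈ s, c t • M k (g t)) = Mᵀ i + ∑ t ∈ s, c t • Mᵀ (g t) by
    funext k; simp [Matrix.transpose_apply]]
  exact det_updateRow_add_sum_smul Mᵀ i s g c h

section Cyc
open Fin.NatCast Fin.CommRing
variable {m : ℕ}

lemma fin_cast_succ_top : ((m+1 : ℕ) : Fin (m+2)) = -1 := by
  have h : ((m+1 : ℕ) : Fin (m+2)) + 1 = 0 := by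
    have h2 : ((m+2 : ℕ) : Fin (m+2)) = 0 := Fin.natCast_self _
    rw [← h2]; push_cast; ring
  exact eq_neg_of_add_eq_zero_left h

lemma fin_sub_one_val {x : Fin (m+2)} (hx : x ≠ 0) : (x - 1).val = x.val - 1 := by
  rw [Fin.coe_sub_one, if_neg hx]

variable (w : Fin (m+2) → ℝ)

noncomputable def sw (a : ℕ) : ℝ := ∑ t ∈ Finset.range a, w ((t : ℕ) : Fin (m+2))

noncomputable def Wc : Matrix (Fin (m+2)) (Fin (m+2)) ℝ :=
  Matrix.of fun i j => ∑ k ∈ Finset.range ((j - i : Fin (m+2)) : ℕ), w (i + (k : Fin (m+2)))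

lemma Wc_zero (j : Fin (m+2)) : Wc w 0 j = sw w j.val := by
  simp only [Wc, sw, Matrix.of_apply, sub_zero, zero_add]

lemma Wc_diag (a : Fin (m+2)) : Wc w a a = 0 := by
  simp [Wc]

lemma Wc_row_rec (a b : Fin (m+2)) (hab : b ≠ a) : Wc w a b = w a + Wc w (a+1) b := by
  have hd : ((b - a : Fin (m+2)) : ℕ) = ((b - (a+1) : Fin (m+2)) : ℕ) + 1 := by
    have h1 : b - (a+1) = (b - a) - 1 := by ring
    have h2 : b - a ≠ 0 := sub_ne_zero_of_ne hab
    rw [h1, fin_sub_one_val h2]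
    have := Fin.pos_iff_ne_zero.mpr h2
    omega
  simp only [Wc, Matrix.of_apply]
  rw [hd, Finset.sum_range_succ']
  have hcast : ∀ k : ℕ, a + ((k+1 : ℕ) : Fin (m+2)) = (a+1) + ((k : ℕ) : Fin (m+2)) := by
    intro k; push_cast; ring
  simp_rw [hcast]
  rw [Nat.cast_zero, add_zero, add_comm]

lemma Wc_wrap (a : Fin (m+2)) : Wc w (a+1) a = (∑ i, w i) - w a := by
  have hd : ((a - (a+1) : Fin (m+2)) : ℕ) = m+1 := by
    have : a - (a+1) = -1 := by ring
    rw [this, Fin.coe_neg_one]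
  simp only [Wc, Matrix.of_apply]
  rw [hd]
  have hful : ∑ k ∈ Finset.range (m+2), w ((a+1) + (k : Fin (m+2))) = ∑ i, w i := by
    rw [← Fin.sum_univ_eq_sum_range (fun k => w ((a+1) + (k : Fin (m+2)))) (m+2)]
    simp_rw [Fin.cast_val_eq_self]
    exact Fintype.sum_equiv (Equiv.addLeft (a+1)) _ _ (fun x => rfl)
  have := Finset.sum_range_succ (fun k => w ((a+1) + (k : Fin (m+2)))) (m+1)
  rw [hful] at this
  rw [eq_sub_iff_add_eq, this]
  congr 2
  rw [fin_cast_succ_top]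
  ring

lemma Wc_row_step (a b : Fin (m+2)) :
    Wc w (a+1) b = Wc w a b - w a + (if b = a then ∑ i, w i else 0) := by
  by_cases hab : b = a
  · subst hab; rw [Wc_wrap, Wc_diag, if_pos rfl]; ring
  · rw [Wc_row_rec w a b hab, if_neg hab]; ring


lemma fin_succ_sub_one (i : Fin (m+1)) : i.succ - 1 = i.castSucc := by
  apply Fin.ext
  rw [fin_sub_one_val (Fin.succ_ne_zero i)]
  simp

noncomputable def Bm : Matrix (Fin (m+2)) (Fin (m+2)) ℝ :=
  Matrix.of fun i j => if i = 0 then sw w j.val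
    else (if j.val + 1 = i.val then (∑ i, w i) else 0) - w (i - 1)

lemma det_Wc_eq_Bm : (Wc w).det = (Bm w).det := by
  apply Matrix.det_eq_of_forall_row_eq_smul_add_pred (fun _ => (1 : ℝ))
  · intro j
    rw [Wc_zero]
    simp [Bm]
  · intro i j
    have h1 : (Bm w) i.succ j = Wc w i.succ j - Wc w i.castSucc j := by
      have h2 : Wc w (i.castSucc + 1) j
          = Wc w i.castSucc j - w i.castSucc + (if j = i.castSucc then ∑ i, w i else 0) := Wc_row_step w _ _
      rw [Fin.coeSucc_eq_succ] at h2
      simp only [Bm, Matrix.of_apply, if_neg (Fin.succ_ne_zero i), fin_succ_sub_one]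
      rw [h2]
      have h3 : (j.val + 1 = i.succ.val) = (j = i.castSucc) := by
        simp only [Fin.val_succ, eq_iff_iff, Fin.ext_iff, Fin.coe_castSucc]
        omega
      simp only [h3]
      ring
    rw [h1]; ring

noncomputable def Xm : Matrix (Fin (m+2)) (Fin (m+2)) ℝ :=
  Matrix.of fun i j =>
    if i = 0 then (if j = 0 then 0 else w (j - 1))
    else if j = 0 then (if i.val = 1 then (∑ i, w i) else 0) - w (i - 1)
    else if j.val = i.val then -(∑ i, w i)
    else if j.val + 1 = i.val then (∑ i, w i) else 0

lemma det_Bm_eq_Xm : (Bm w).det = (Xm w).det := by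
  apply Matrix.det_eq_of_forall_col_eq_smul_add_pred (fun _ => (1 : ℝ))
  · intro i
    by_cases hi : i = 0
    · subst hi; simp [Bm, Xm, sw]
    · simp only [Bm, Xm, Matrix.of_apply, if_neg hi, Fin.val_zero]
      have h4 : (0 + 1 = i.val) = (i.val = 1) := by simp [eq_comm]
      simp only [h4, if_true]
  · intro i j
    have hsj : j.succ ≠ 0 := Fin.succ_ne_zero j
    by_cases hi : i = 0
    · subst hi
      simp only [Bm, Xm, Matrix.of_apply, if_pos rfl, if_neg hsj, fin_succ_sub_one,
        Fin.val_succ, Fin.coe_castSucc]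
      rw [sw, Finset.sum_range_succ, ← sw]
      have : ((j.val : ℕ) : Fin (m+2)) = j.castSucc := by
        apply Fin.ext
        simp [Nat.mod_eq_of_lt (by omega : j.val < m+2)]
      rw [this]
      by_cases hj0 : j.castSucc = 0 <;> simp [hj0] <;> ring
    · simp only [Bm, Xm, Matrix.of_apply, if_neg hi, if_neg hsj, Fin.val_succ, Fin.coe_castSucc]
      split_ifs <;> first | ring1 | (exfalso; omega)


lemma fin_val_cast_of_lt {a : ℕ} (h : a < m+2) : (((a : ℕ) : Fin (m+2)) : ℕ) = a := by
  simp [Fin.val_natCast, Nat.mod_eq_of_lt h]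

/-- numerator of the pivot entry -/
noncomputable def nu : ℝ :=
  ∑ t ∈ Finset.range (m+1), ((∑ i, w i) - sw w (t+1)) * w ((t : ℕ) : Fin (m+2))

noncomputable def t0 : ℝ := nu w / (∑ i, w i)

noncomputable def Ym : Matrix (Fin (m+2)) (Fin (m+2)) ℝ :=
  Matrix.of fun i j => if j = 0 then (if i = 0 then t0 w else 0) else Xm w i j

lemma hgne : ∀ t ∈ Finset.range (m+1), (((t+1 : ℕ) : Fin (m+2))) ≠ (0 : Fin (m+2)) := by
  intro t ht
  rw [Finset.mem_range] at ht
  have hv : (((t+1 : ℕ) : Fin (m+2)) : ℕ) = t+1 := fin_val_cast_of_lt (by omega)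
  intro h; rw [h] at hv; simp at hv

lemma sw_succ (a : ℕ) : sw w (a+1) = sw w a + w ((a : ℕ) : Fin (m+2)) :=
  Finset.sum_range_succ _ _

lemma det_Xm_eq_Ym (hw : (∑ i, w i) ≠ 0) : (Xm w).det = (Ym w).det := by
  rw [← det_updateCol_add_sum_smul (Xm w) 0 (Finset.range (m+1))
    (fun t => ((t+1 : ℕ) : Fin (m+2)))
    (fun t => ((∑ i, w i) - sw w (t+1))/(∑ i, w i)) hgne]
  congr 1
  ext i j
  rw [Matrix.updateCol_apply]
  by_cases hj : j = 0
  case neg => rw [if_neg hj]; simp only [Ym, Matrix.of_apply, if_neg hj]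
  rw [if_pos hj]
  subst hj
  by_cases hi : i = 0
  · subst hi
    have h1 : ∀ t ∈ Finset.range (m+1),
        (((∑ i, w i) - sw w (t+1))/(∑ i, w i)) • Xm w 0 (((t+1 : ℕ) : Fin (m+2)))
        = ((∑ i, w i) - sw w (t+1)) * w ((t : ℕ) : Fin (m+2)) / (∑ i, w i) := by
      intro t ht
      have ht' := Finset.mem_range.mp ht
      have hgt := hgne t ht
      have hc : (((t+1 : ℕ) : Fin (m+2)) - 1) = ((t : ℕ) : Fin (m+2)) := by
        apply Fin.ext
        rw [fin_sub_one_val hgt, fin_val_cast_of_lt (by omega : t+1 < m+2),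
          fin_val_cast_of_lt (by omega : t < m+2)]
        omega
      simp only [Xm, Matrix.of_apply, if_pos rfl, if_neg hgt, hc, smul_eq_mul, if_true, ite_true, eq_self_iff_true]
      ring
    rw [Finset.sum_congr rfl h1, ← Finset.sum_div]
    simp only [Ym, Xm, Matrix.of_apply, if_pos rfl]
    rw [← nu, ← t0]
    simp
  · -- row i ≠ 0 : column entry becomes 0
    have hiv : 1 ≤ i.val := by
      rcases Nat.eq_zero_or_pos i.val with h | h
      · exact absurd (Fin.ext h) hi
      · omega
    have hile : i.val ≤ m+1 := by omega
    have him : ((i.val - 1 : ℕ) : Fin (m+2)) = i - 1 := by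
      apply Fin.ext
      rw [fin_val_cast_of_lt (by omega), fin_sub_one_val hi]
    simp only [Ym, Matrix.of_apply, if_pos rfl, if_neg hi]
    by_cases h2 : 2 ≤ i.val
    · have h1 : ∀ t ∈ Finset.range (m+1),
          (((∑ i, w i) - sw w (t+1))/(∑ i, w i)) • Xm w i (((t+1 : ℕ) : Fin (m+2)))
          = (if t = i.val - 1 then -((((∑ i, w i) - sw w (t+1))/(∑ i, w i)) * (∑ i, w i)) else 0)
            + (if t = i.val - 2 then (((∑ i, w i) - sw w (t+1))/(∑ i, w i)) * (∑ i, w i) else 0) := by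
        intro t ht
        have ht' := Finset.mem_range.mp ht
        have hgt := hgne t ht
        have hv : (((t+1 : ℕ) : Fin (m+2)) : ℕ) = t+1 := fin_val_cast_of_lt (by omega)
        simp only [Xm, Matrix.of_apply, if_neg hi, if_neg hgt, hv, smul_eq_mul]
        split_ifs <;> first | ring1 | (exfalso; omega)
      rw [Finset.sum_congr rfl h1, Finset.sum_add_distrib,
        Finset.sum_ite_eq' (Finset.range (m+1)) (i.val - 1),
        Finset.sum_ite_eq' (Finset.range (m+1)) (i.val - 2),
        if_pos (Finset.mem_range.mpr (by omega)), if_pos (Finset.mem_range.mpr (by omega))]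
      simp only [Xm, Matrix.of_apply, if_neg hi, if_pos rfl, if_neg (by omega : ¬ (i.val = 1))]
      rw [show (i.val - 1) + 1 = i.val by omega, show (i.val - 2) + 1 = i.val - 1 by omega]
      rw [show i.val = (i.val - 1) + 1 by omega, sw_succ, him]
      field_simp
      simp only [if_true, Nat.add_sub_cancel]
      ring
    · have hone : i.val = 1 := by omega
      have h1 : ∀ t ∈ Finset.range (m+1),
          (((∑ i, w i) - sw w (t+1))/(∑ i, w i)) • Xm w i (((t+1 : ℕ) : Fin (m+2)))
          = (if t = 0 then -((((∑ i, w i) - sw w (t+1))/(∑ i, w i)) * (∑ i, w i)) else 0) := by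
        intro t ht
        have ht' := Finset.mem_range.mp ht
        have hgt := hgne t ht
        have hv : (((t+1 : ℕ) : Fin (m+2)) : ℕ) = t+1 := fin_val_cast_of_lt (by omega)
        simp only [Xm, Matrix.of_apply, if_neg hi, if_neg hgt, hv, smul_eq_mul]
        split_ifs <;> first | ring1 | (exfalso; omega)
      rw [Finset.sum_congr rfl h1,
        Finset.sum_ite_eq' (Finset.range (m+1)) 0,
        if_pos (Finset.mem_range.mpr (by omega))]
      simp only [Xm, Matrix.of_apply, if_neg hi, if_pos rfl, if_pos hone]
      have hi1 : i - 1 = 0 := by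
        apply Fin.ext
        rw [fin_sub_one_val hi, hone]
        rfl
      rw [hi1, show (0:ℕ)+1 = 1 by rfl, sw, Finset.sum_range_one, Nat.cast_zero]
      field_simp
      simp only [if_true]
      ring

lemma sum_univ_sw : (∑ i, w i) = sw w (m+2) := by
  rw [sw, ← Fin.sum_univ_eq_sum_range]
  simp_rw [Fin.cast_val_eq_self]

noncomputable def Tm : Matrix (Fin (m+2)) (Fin (m+2)) ℝ :=
  Matrix.of fun i j =>
    if i = 0 then (if j = 0 then t0 w else 0)
    else if j = 0 then 0
    else if j.val = i.val then -(∑ i, w i)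
    else if j.val + 1 = i.val then (∑ i, w i) else 0

lemma det_Ym_eq_Tm (hw : (∑ i, w i) ≠ 0) : (Ym w).det = (Tm w).det := by
  rw [← det_updateRow_add_sum_smul (Ym w) 0 (Finset.range (m+1))
    (fun t => ((t+1 : ℕ) : Fin (m+2)))
    (fun t => ((∑ i, w i) - w (-1) - sw w t)/(∑ i, w i)) hgne]
  congr 1
  ext i j
  rw [Matrix.updateRow_apply]
  by_cases hi : i = 0
  case neg =>
    rw [if_neg hi]
    by_cases hj : j = 0
    · simp only [Ym, Tm, Matrix.of_apply, if_neg hi, if_pos hj]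
    · simp only [Ym, Tm, Xm, Matrix.of_apply, if_neg hi, if_neg hj]
  rw [if_pos hi]
  subst hi
  rw [Pi.add_apply, Finset.sum_apply]
  have hTm : Tm w 0 j = (if j = 0 then t0 w else 0) := by
    simp only [Tm, Matrix.of_apply, if_pos rfl, if_true, ite_true, eq_self_iff_true]
  rw [hTm]
  by_cases hj : j = 0
  · subst hj
    have h1 : ∀ t ∈ Finset.range (m+1),
        ((((∑ i, w i) - w (-1) - sw w t)/(∑ i, w i)) • Ym w (((t+1 : ℕ) : Fin (m+2)))) 0 = 0 := by
      intro t ht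
      have hgt := hgne t ht
      simp only [Pi.smul_apply, Ym, Matrix.of_apply, if_pos rfl, if_neg hgt, smul_eq_mul,
        mul_zero, if_true, ite_true, eq_self_iff_true]
    rw [Finset.sum_congr rfl h1, Finset.sum_const_zero, if_pos rfl]
    simp only [Ym, Matrix.of_apply, if_pos rfl, add_zero, if_true, ite_true, eq_self_iff_true]
  · rw [if_neg hj]
    have hjv : 1 ≤ j.val := by
      rcases Nat.eq_zero_or_pos j.val with h | h
      · exact absurd (Fin.ext h) hj
      · omega
    have hjle : j.val ≤ m+1 := by omega
    have hY0 : Ym w 0 j = w (j - 1) := by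
      simp only [Ym, Xm, Matrix.of_apply, if_neg hj, if_pos rfl, if_true, ite_true,
        eq_self_iff_true]
    rw [hY0]
    by_cases hjm : j.val ≤ m
    · have h1 : ∀ t ∈ Finset.range (m+1),
          ((((∑ i, w i) - w (-1) - sw w t)/(∑ i, w i)) • Ym w (((t+1 : ℕ) : Fin (m+2)))) j
          = (if t = j.val - 1 then -((((∑ i, w i) - w (-1) - sw w t)/(∑ i, w i)) * (∑ i, w i)) else 0)
            + (if t = j.val then (((∑ i, w i) - w (-1) - sw w t)/(∑ i, w i)) * (∑ i, w i) else 0) := by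
        intro t ht
        have ht' := Finset.mem_range.mp ht
        have hgt := hgne t ht
        have hv : (((t+1 : ℕ) : Fin (m+2)) : ℕ) = t+1 := fin_val_cast_of_lt (by omega)
        simp only [Pi.smul_apply, Ym, Xm, Matrix.of_apply, if_neg hgt, if_neg hj, hv,
          smul_eq_mul]
        split_ifs <;> first | ring1 | (exfalso; omega)
      rw [Finset.sum_congr rfl h1, Finset.sum_add_distrib,
        Finset.sum_ite_eq' (Finset.range (m+1)) (j.val - 1),
        Finset.sum_ite_eq' (Finset.range (m+1)) (j.val),
        if_pos (Finset.mem_range.mpr (by omega)), if_pos (Finset.mem_range.mpr (by omega))]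
      set a := j.val - 1 with ha
      have haj : j.val = a + 1 := by omega
      have him : ((a : ℕ) : Fin (m+2)) = j - 1 := by
        apply Fin.ext
        rw [fin_val_cast_of_lt (by omega), fin_sub_one_val hj, ha]
      rw [haj, sw_succ, him]
      field_simp
      ring
    · have hjtop : j.val = m+1 := by omega
      have h1 : ∀ t ∈ Finset.range (m+1),
          ((((∑ i, w i) - w (-1) - sw w t)/(∑ i, w i)) • Ym w (((t+1 : ℕ) : Fin (m+2)))) j
          = (if t = m then -((((∑ i, w i) - w (-1) - sw w t)/(∑ i, w i)) * (∑ i, w i)) else 0) := by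
        intro t ht
        have ht' := Finset.mem_range.mp ht
        have hgt := hgne t ht
        have hv : (((t+1 : ℕ) : Fin (m+2)) : ℕ) = t+1 := fin_val_cast_of_lt (by omega)
        simp only [Pi.smul_apply, Ym, Xm, Matrix.of_apply, if_neg hgt, if_neg hj, hv,
          smul_eq_mul]
        split_ifs <;> first | ring1 | (exfalso; omega)
      rw [Finset.sum_congr rfl h1,
        Finset.sum_ite_eq' (Finset.range (m+1)) m,
        if_pos (Finset.mem_range.mpr (by omega))]
      have hws : (∑ i, w i) = sw w (m+1) + w (-1) := by
        rw [sum_univ_sw]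
        exact (sw_succ w (m+1)).trans (by rw [fin_cast_succ_top])
      have hsm : sw w (m+1) = sw w m + w ((m : ℕ) : Fin (m+2)) := sw_succ w m
      have hjm1 : j - 1 = ((m : ℕ) : Fin (m+2)) := by
        apply Fin.ext
        rw [fin_sub_one_val hj, hjtop, fin_val_cast_of_lt (by omega)]
        omega
      rw [hjm1, div_mul_cancel₀ _ hw]
      linear_combination -hws - hsm

lemma det_Tm_eq (hw : (∑ i, w i) ≠ 0) : (Tm w).det = t0 w * (-(∑ i, w i))^(m+1) := by
  rw [Matrix.det_of_lowerTriangular]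
  · rw [Fin.prod_univ_succ]
    have h0 : Tm w 0 0 = t0 w := by simp [Tm]
    have hs : ∀ i : Fin (m+1), Tm w i.succ i.succ = -(∑ i, w i) := by
      intro i
      simp only [Tm, Matrix.of_apply, if_neg (Fin.succ_ne_zero i), if_pos rfl, if_true,
        ite_true, eq_self_iff_true]
    rw [h0]
    simp_rw [hs]
    rw [Finset.prod_const, Finset.card_univ, Fintype.card_fin]
  · intro i j hij
    have hvij : (i : ℕ) < (j : ℕ) := hij
    have hi0 : ¬ (i = 0) ∨ True := Or.inr trivial
    simp only [Tm, Matrix.of_apply]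
    split_ifs with h1 h2 h3 h4 h5 <;>
      first
        | rfl
        | (exfalso; subst h1; simp at hvij; omega)
        | (exfalso; omega)

lemma Iic_Ioi_split (i : Fin (m+2)) (f : Fin (m+2) → ℝ) :
    ∑ j ∈ Finset.Iic i, f j + ∑ j ∈ Finset.Ioi i, f j = ∑ j, f j := by
  rw [← Finset.sum_union (by simp [Finset.disjoint_left]),
    show Finset.Iic i ∪ Finset.Ioi i = Finset.univ from by
      ext x; simp [le_or_gt]]

lemma sw_Iic (i : Fin (m+2)) : sw w (i.val+1) = ∑ j ∈ Finset.Iic i, w j := by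
  rw [sw]
  apply Finset.sum_nbij' (i := fun t => ((t : ℕ) : Fin (m+2))) (j := fun x => (x : ℕ))
  · intro a ha
    rw [Finset.mem_range] at ha
    rw [Finset.mem_Iic, Fin.le_def, fin_val_cast_of_lt (by omega)]
    omega
  · intro a ha
    rw [Finset.mem_Iic, Fin.le_def] at ha
    rw [Finset.mem_range]
    omega
  · intro a ha
    rw [Finset.mem_range] at ha
    rw [fin_val_cast_of_lt (by omega)]
  · intro a _
    exact Fin.cast_val_eq_self a
  · intro a _
    rfl

lemma nu_eq : nu w = ∑ i, ∑ j ∈ Finset.Ioi i, w i * w j := by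
  have h1 : ∀ i : Fin (m+2), ∑ j ∈ Finset.Ioi i, w i * w j
      = ((∑ k, w k) - sw w (i.val+1)) * w i := by
    intro i
    rw [← Finset.mul_sum]
    have h2 : ∑ j ∈ Finset.Ioi i, w j = (∑ k, w k) - sw w (i.val+1) := by
      rw [sw_Iic, eq_sub_iff_add_eq, add_comm]
      exact Iic_Ioi_split i w
    rw [h2]; ring
  rw [Finset.sum_congr rfl (fun i _ => h1 i)]
  have h4 : ∑ i : Fin (m+2), ((∑ k, w k) - sw w (i.val+1)) * w i
      = ∑ t ∈ Finset.range (m+2), ((∑ k, w k) - sw w (t+1)) * w ((t : ℕ) : Fin (m+2)) := by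
    rw [← Fin.sum_univ_eq_sum_range (fun t => ((∑ k, w k) - sw w (t+1)) * w ((t : ℕ) : Fin (m+2))) (m+2)]
    simp_rw [Fin.cast_val_eq_self]
  rw [h4, Finset.sum_range_succ]
  have h5 : (∑ k, w k) - sw w (m+1+1) = 0 := by
    rw [sub_eq_zero, sum_univ_sw]
  rw [h5, zero_mul, add_zero, nu]

theorem cycle_det (hw : (∑ i, w i) ≠ 0) :
    (Wc w).det = (-1 : ℝ)^(m+1) * (∑ i, w i)^m * (∑ i, ∑ j ∈ Finset.Ioi i, w i * w j) := by
  rw [det_Wc_eq_Bm, det_Bm_eq_Xm, det_Xm_eq_Ym w hw, det_Ym_eq_Tm w hw, det_Tm_eq w hw,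
    t0, nu_eq, neg_pow]
  field_simp
  ring

end Cyc

open Fin.NatCast in
theorem stmt_11 {n : ℕ} [NeZero n] (hn : 2 ≤ n) (w : Fin n → ℝ)
    (hw : (∑ i, w i) ≠ 0)
    (W : Matrix (Fin n) (Fin n) ℝ)
    (hW : W = Matrix.of fun i j => ∑ k ∈ Finset.range ((j - i : Fin n) : ℕ), w (i + (k : Fin n))) :
    W.det = (-1 : ℝ) ^ (n - 1) * (∑ i, w i) ^ (n - 2) *
      (∑ i, ∑ j ∈ Finset.Ioi i, w i * w j) := by
  subst hW
  obtain ⟨m, rfl⟩ : ∃ m, n = m + 2 := ⟨n - 2, by omega⟩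
  have h := cycle_det w hw
  simpa [Wc, show m+2-1 = m+1 from rfl, show m+2-2 = m from rfl] using h
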